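/- Let A ∈ 𝓑 and suppose there exist a measurable function V : S → [0,∞) and a constant c > 0 such that ∫_S V(y) P(x,dy) ≤ V(x) − c for all x ∉ A. Then for every x ∉ A, 𝔼^x(T_A) ≤ V(x)/c; in particular ℙ^x(T_A < ∞) = 1 for all x ∉ A. -/

import Mathlib

open MeasureTheory ProbabilityTheory
open scoped ENNReal NNReal

noncomputable section

/-- The hitting time `T_A = inf {n ≥ 1 : ω n ∈ A}`, with value `⊤ : ℕ∞` if no such `n` exists. -/
def hitTime {S : Type*} (A : Set S) (ω : ℕ → S) : ℕ∞ :=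
  sInf ((fun k : ℕ => (k : ℕ∞)) '' {k : ℕ | 1 ≤ k ∧ ω k ∈ A})

/-- `IsMarkovPath K μ₀ L` says that `L` is the law on path space `ℕ → E` of the
time-homogeneous Markov chain with transition kernel `K` and initial distribution `μ₀`
(the measure produced by the Ionescu–Tulcea construction), characterized through its
finite-dimensional distributions. -/
def IsMarkovPath {E : Type*} [MeasurableSpace E] (K : Kernel E E) (μ₀ : Measure E)
    (L : Measure (ℕ → E)) : Prop :=
  IsProbabilityMeasure L ∧
    L.map (fun ω => ω 0) = μ₀ ∧
    ∀ n : ℕ,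
      L.map (fun ω => fun i : Fin (n + 2) => ω (i : ℕ)) =
        (L.map (fun ω => fun i : Fin (n + 1) => ω (i : ℕ))).bind
          (fun v => (K (v (Fin.last n))).map (Fin.snoc v))


section DriftAux

variable {S : Type*} [MeasurableSpace S]

/-- The "no visit to `A` up to time `n`" cylinder set. -/
def Bset (A : Set S) (n : ℕ) : Set (Fin (n + 1) → S) := {v | ∀ i, v i ∉ A}

lemma measurableSet_Bset {A : Set S} (hA : MeasurableSet A) (n : ℕ) :
    MeasurableSet (Bset A n) := by
  have : Bset A n = ⋂ i : Fin (n + 1), (fun v : Fin (n + 1) → S => v i) ⁻¹' Aᶜ := by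
    ext v; simp [Bset]
  rw [this]
  exact MeasurableSet.iInter fun i => (measurable_pi_apply i) hA.compl

/-- The Lyapunov functional on the cylinder set. -/
def Gfun (A : Set S) (V : S → ℝ≥0∞) (n : ℕ) : (Fin (n + 1) → S) → ℝ≥0∞ :=
  (Bset A n).indicator (fun v => V (v (Fin.last n)))

lemma measurable_Gfun {A : Set S} (hA : MeasurableSet A) {V : S → ℝ≥0∞}
    (hV : Measurable V) (n : ℕ) : Measurable (Gfun A V n) :=
  (hV.comp (measurable_pi_apply _)).indicator (measurableSet_Bset hA n)

lemma measurable_snoc_pair (n : ℕ) :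
    Measurable (fun p : (Fin (n + 1) → S) × S => (Fin.snoc p.1 p.2 : Fin (n + 2) → S)) := by
  refine measurable_pi_lambda _ fun i => ?_
  induction i using Fin.lastCases with
  | last => simpa [Fin.snoc_last] using measurable_snd
  | cast j => simp only [Fin.snoc_castSucc]; exact (measurable_pi_apply j).comp measurable_fst

lemma measurable_snocKernel (P : Kernel S S) [IsMarkovKernel P] (n : ℕ) :
    Measurable (fun v : Fin (n + 1) → S =>
      ((P (v (Fin.last n))).map (Fin.snoc v) : Measure (Fin (n + 2) → S))) := by
  have h : (fun v : Fin (n + 1) → S =>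
        ((P (v (Fin.last n))).map (Fin.snoc v) : Measure (Fin (n + 2) → S)))
      = ⇑(Kernel.map
          (Kernel.id ×ₖ (P.comap (fun v : Fin (n + 1) → S => v (Fin.last n))
            (measurable_pi_apply _)))
          (fun p : (Fin (n + 1) → S) × S => (Fin.snoc p.1 p.2 : Fin (n + 2) → S))) := by
    funext v
    rw [Kernel.map_apply _ (measurable_snoc_pair n), Kernel.prod_apply, Kernel.id_apply,
      Kernel.comap_apply, Measure.dirac_prod,
      Measure.map_map (measurable_snoc_pair n) measurable_prodMk_left]
    rfl
  rw [h]
  exact Kernel.measurable _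

omit [MeasurableSpace S] in
lemma snoc_mem_Bset {A : Set S} {n : ℕ} {v : Fin (n + 1) → S} {y : S} :
    (Fin.snoc v y : Fin (n + 2) → S) ∈ Bset A (n + 1) ↔ v ∈ Bset A n ∧ y ∉ A := by
  constructor
  · intro h
    refine ⟨fun i => ?_, ?_⟩
    · simpa [Fin.snoc_castSucc] using h i.castSucc
    · simpa [Fin.snoc_last] using h (Fin.last _)
  · rintro ⟨h1, h2⟩ i
    induction i using Fin.lastCases with
    | last => simpa [Fin.snoc_last] using h2
    | cast j => simpa [Fin.snoc_castSucc] using h1 j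

omit [MeasurableSpace S] in
lemma Gfun_snoc (A : Set S) (V : S → ℝ≥0∞) (n : ℕ) (v : Fin (n + 1) → S) (y : S) :
    Gfun A V (n + 1) (Fin.snoc v y) =
      (Bset A n).indicator (fun _ => Set.indicator Aᶜ V y) v := by
  by_cases hv : v ∈ Bset A n
  · by_cases hy : y ∈ A
    · have : (Fin.snoc v y : Fin (n + 2) → S) ∉ Bset A (n + 1) := by
        rw [snoc_mem_Bset]; tauto
      simp [Gfun, Set.indicator_of_notMem this, Set.indicator_of_mem hv,
        Set.indicator_of_notMem (by simpa using hy : y ∉ Aᶜ)]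
    · have hmem : (Fin.snoc v y : Fin (n + 2) → S) ∈ Bset A (n + 1) :=
        snoc_mem_Bset.mpr ⟨hv, hy⟩
      simp [Gfun, Set.indicator_of_mem hmem, Set.indicator_of_mem hv,
        Set.indicator_of_mem (by simpa using hy : y ∈ Aᶜ), Fin.snoc_last]
  · have : (Fin.snoc v y : Fin (n + 2) → S) ∉ Bset A (n + 1) := by
      rw [snoc_mem_Bset]; tauto
    simp [Gfun, Set.indicator_of_notMem this, Set.indicator_of_notMem hv]

end DriftAux

/-- A `ℕ∞`-valued quantity, coerced to `ℝ≥0∞`, equals the sum of the indicators of the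
events `{n < ·}`. -/
lemma enat_toENNReal_eq_tsum (a : ℕ∞) :
    (a : ℝ≥0∞) = ∑' n : ℕ, if (n : ℕ∞) < a then 1 else 0 := by
  cases a with
  | top =>
    have h : ∀ n : ℕ, (if ((n : ℕ∞) < (⊤ : ℕ∞)) then (1 : ℝ≥0∞) else 0) = 1 := by
      intro n
      simp [lt_top_iff_ne_top]
    rw [ENat.toENNReal_top]
    rw [tsum_congr h]
    exact (ENNReal.tsum_const_eq_top_of_ne_zero one_ne_zero).symm
  | coe m =>
    rw [ENat.toENNReal_coe]
    rw [tsum_eq_sum (s := Finset.range m) (by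
      intro n hn
      have : ¬ (n : ℕ∞) < (m : ℕ∞) := by
        simpa using Finset.mem_range.not.mp hn
      simp [this])]
    have h : ∀ n ∈ Finset.range m, (if ((n : ℕ∞) < (m : ℕ∞)) then (1 : ℝ≥0∞) else 0) = 1 := by
      intro n hn
      simp [Nat.cast_lt.mpr (Finset.mem_range.mp hn)]
    rw [Finset.sum_congr rfl h]
    simp

lemma enat_lt_iff_forall (a : ℕ∞) : (∀ n : ℕ, (n : ℕ∞) < a) ↔ a = ⊤ := by
  constructor
  · intro h
    by_contra hne
    lift a to ℕ using hne
    exact lt_irrefl _ (Nat.cast_lt.mp (h a))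
  · rintro rfl n
    exact lt_top_iff_ne_top.mpr (by simp)

theorem hitting_time_bound_of_drift
    {S : Type*} [MeasurableSpace S] [MeasurableSpace.CountablyGenerated S]
    (P : Kernel S S) [IsMarkovKernel P]
    (Pr : S → Measure (ℕ → S))
    (hPr : ∀ x : S, IsMarkovPath P (Measure.dirac x) (Pr x))
    (A : Set S) (hA : MeasurableSet A)
    (V : S → ℝ≥0∞) (hVmeas : Measurable V) (hVfin : ∀ x, V x ≠ ⊤)
    (c : ℝ≥0) (hc : 0 < c)
    (hdrift : ∀ x ∉ A, (∫⁻ y, V y ∂(P x)) + (c : ℝ≥0∞) ≤ V x) :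
    ∀ x ∉ A,
      (∫⁻ ω, (hitTime A ω : ℝ≥0∞) ∂(Pr x)) ≤ V x / (c : ℝ≥0∞) ∧
      Pr x {ω | hitTime A ω < ⊤} = 1 := by
  intro x hx
  obtain ⟨hPM, hinit, hrec⟩ := hPr x
  haveI : IsProbabilityMeasure (Pr x) := hPM
  have hcne : (c : ℝ≥0∞) ≠ 0 := by exact_mod_cast hc.ne'
  have hproj : ∀ n : ℕ, Measurable (fun ω : ℕ → S => fun i : Fin (n + 1) => ω (i : ℕ)) :=
    fun n => measurable_pi_lambda _ fun i => measurable_pi_apply _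
  have hPV : Measurable fun s : S => ∫⁻ y, V y ∂ P s :=
    Measurable.lintegral_kernel_prod_right (hVmeas.comp measurable_snd)
  set μ : (n : ℕ) → Measure (Fin (n + 1) → S) :=
    fun n => (Pr x).map (fun ω => fun i : Fin (n + 1) => ω (i : ℕ)) with hμ
  set a : ℕ → ℝ≥0∞ := fun n => ∫⁻ v, Gfun A V n v ∂ μ n with ha
  set p : ℕ → ℝ≥0∞ := fun n => μ n (Bset A n) with hp
  -- the one-step drift inequality
  have hstep : ∀ n : ℕ, a (n + 1) + (c : ℝ≥0∞) * p n ≤ a n := by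
    intro n
    have hbind : μ (n + 1) =
        (μ n).bind (fun v => ((P (v (Fin.last n))).map (Fin.snoc v) : Measure (Fin (n + 2) → S))) := by
      simp only [hμ]
      exact hrec n
    have h1 : a (n + 1) =
        ∫⁻ v, ∫⁻ w, Gfun A V (n + 1) w
          ∂ ((P (v (Fin.last n))).map (Fin.snoc v) : Measure (Fin (n + 2) → S)) ∂ μ n := by
      simp only [ha]
      rw [hbind]
      exact Measure.lintegral_bind (measurable_snocKernel P n).aemeasurable (measurable_Gfun hA hVmeas (n + 1)).aemeasurable
    have hsnocv : ∀ v : Fin (n + 1) → S,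
        Measurable (fun y : S => (Fin.snoc v y : Fin (n + 2) → S)) := fun v =>
      (measurable_snoc_pair n).comp measurable_prodMk_left
    have h2 : ∀ v : Fin (n + 1) → S,
        (∫⁻ w, Gfun A V (n + 1) w
          ∂ ((P (v (Fin.last n))).map (Fin.snoc v) : Measure (Fin (n + 2) → S))) ≤
          (Bset A n).indicator (fun v => ∫⁻ y, V y ∂ P (v (Fin.last n))) v := by
      intro v
      rw [lintegral_map (measurable_Gfun hA hVmeas (n + 1)) (hsnocv v)]
      calc ∫⁻ y, Gfun A V (n + 1) (Fin.snoc v y) ∂ P (v (Fin.last n))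
          = ∫⁻ y, (Bset A n).indicator (fun _ => Set.indicator Aᶜ V y) v ∂ P (v (Fin.last n)) := by
            simp_rw [Gfun_snoc]
        _ ≤ _ := by
            by_cases hv : v ∈ Bset A n
            · simp only [Set.indicator_of_mem hv]
              exact lintegral_mono fun y => Set.indicator_le_self _ _ y
            · simp [Set.indicator_of_notMem hv]
    have h3 : a (n + 1) ≤
        ∫⁻ v, (Bset A n).indicator (fun v => ∫⁻ y, V y ∂ P (v (Fin.last n))) v ∂ μ n := by
      rw [h1]; exact lintegral_mono h2
    have hindmeas : Measurable
        ((Bset A n).indicator (fun v : Fin (n + 1) → S => ∫⁻ y, V y ∂ P (v (Fin.last n)))) :=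
      (hPV.comp (measurable_pi_apply _)).indicator (measurableSet_Bset hA n)
    calc a (n + 1) + (c : ℝ≥0∞) * p n
        ≤ (∫⁻ v, (Bset A n).indicator (fun v => ∫⁻ y, V y ∂ P (v (Fin.last n))) v ∂ μ n)
          + ∫⁻ v, (Bset A n).indicator (fun _ => (c : ℝ≥0∞)) v ∂ μ n := by
          refine add_le_add h3 ?_
          rw [lintegral_indicator_const (measurableSet_Bset hA n)]
      _ = ∫⁻ v, ((Bset A n).indicator (fun v => ∫⁻ y, V y ∂ P (v (Fin.last n))) v
            + (Bset A n).indicator (fun _ => (c : ℝ≥0∞)) v) ∂ μ n :=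
          (lintegral_add_left hindmeas _).symm
      _ ≤ ∫⁻ v, Gfun A V n v ∂ μ n := by
          refine lintegral_mono fun v => ?_
          by_cases hv : v ∈ Bset A n
          · simp only [Set.indicator_of_mem hv, Gfun]
            exact hdrift _ (hv (Fin.last n))
          · simp [Set.indicator_of_notMem hv, Gfun]
      _ = a n := by simp only [ha]
  -- initial value
  have hμ0 : μ 0 = Measure.dirac (fun _ : Fin (0 + 1) => x) := by
    have hcomp : (fun ω : ℕ → S => fun i : Fin (0 + 1) => ω (i : ℕ))
        = (fun s : S => fun _ : Fin (0 + 1) => s) ∘ (fun ω : ℕ → S => ω 0) := by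
      funext ω i
      have : (i : ℕ) = 0 := Nat.lt_one_iff.mp i.isLt
      simp [Function.comp, this]
    have hg : Measurable (fun s : S => fun _ : Fin (0 + 1) => s) :=
      measurable_pi_lambda _ fun _ => measurable_id
    simp only [hμ]
    rw [hcomp, ← Measure.map_map hg (measurable_pi_apply 0), hinit, Measure.map_dirac' hg]
  have ha0 : a 0 = V x := by
    simp only [ha]
    rw [hμ0, lintegral_dirac' _ (measurable_Gfun hA hVmeas 0)]
    have hmem : (fun _ : Fin (0 + 1) => x) ∈ Bset A 0 := fun _ => hx
    simp [Gfun, Set.indicator_of_mem hmem]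
  -- telescoping
  have hkey : ∀ N : ℕ, (∑ k ∈ Finset.range N, (c : ℝ≥0∞) * p k) + a N ≤ a 0 := by
    intro N
    induction N with
    | zero => simp
    | succ N ih =>
      rw [Finset.sum_range_succ]
      calc (∑ k ∈ Finset.range N, (c : ℝ≥0∞) * p k) + (c : ℝ≥0∞) * p N + a (N + 1)
          = (∑ k ∈ Finset.range N, (c : ℝ≥0∞) * p k) + (a (N + 1) + (c : ℝ≥0∞) * p N) := by
            ring
        _ ≤ (∑ k ∈ Finset.range N, (c : ℝ≥0∞) * p k) + a N := add_le_add_right (hstep N) _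
        _ ≤ a 0 := ih
  have hsum : ∀ N : ℕ, (∑ k ∈ Finset.range N, (c : ℝ≥0∞) * p k) ≤ V x := by
    intro N
    calc (∑ k ∈ Finset.range N, (c : ℝ≥0∞) * p k)
        ≤ (∑ k ∈ Finset.range N, (c : ℝ≥0∞) * p k) + a N := le_self_add
      _ ≤ a 0 := hkey N
      _ = V x := ha0
  have htsum_p : ∑' n, p n ≤ V x / (c : ℝ≥0∞) := by
    have h1 : (c : ℝ≥0∞) * ∑' n, p n ≤ V x := by
      rw [← ENNReal.tsum_mul_left]
      refine Summable.tsum_le_of_sum_le ENNReal.summable fun s => ?_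
      calc ∑ k ∈ s, (c : ℝ≥0∞) * p k
          ≤ ∑ k ∈ Finset.range (s.sup id + 1), (c : ℝ≥0∞) * p k :=
            Finset.sum_le_sum_of_subset fun k hk =>
              Finset.mem_range.mpr (Nat.lt_succ_of_le (Finset.le_sup (f := id) hk))
        _ ≤ V x := hsum _
    rw [ENNReal.le_div_iff_mul_le (Or.inl hcne) (Or.inl ENNReal.coe_ne_top)]
    rwa [mul_comm]
  -- the events {T > n}
  set s' : ℕ → Set (ℕ → S) :=
    fun n => ⋂ k ∈ Finset.Icc 1 n, (fun ω : ℕ → S => ω k) ⁻¹' Aᶜ with hs'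
  have hs'meas : ∀ n, MeasurableSet (s' n) := fun n =>
    MeasurableSet.biInter (Finset.Icc 1 n).countable_toSet
      fun k _ => (measurable_pi_apply k) hA.compl
  have hs'mem : ∀ n (ω : ℕ → S), ω ∈ s' n ↔ ∀ k, 1 ≤ k → k ≤ n → ω k ∉ A := by
    intro n ω
    simp only [hs', Set.mem_iInter, Set.mem_preimage, Set.mem_compl_iff, Finset.mem_Icc]
    constructor
    · intro h k hk1 hkn; exact h k ⟨hk1, hkn⟩
    · rintro h k ⟨hk1, hkn⟩; exact h k hk1 hkn
  have hset : ∀ (n : ℕ) (ω : ℕ → S), (n : ℕ∞) < hitTime A ω ↔ ω ∈ s' n := by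
    intro n ω
    constructor
    · intro h
      rw [hs'mem]
      intro k hk1 hkn hkA
      have h1 : hitTime A ω ≤ (k : ℕ∞) := sInf_le ⟨k, ⟨hk1, hkA⟩, rfl⟩
      have h2 : (n : ℕ∞) < (k : ℕ∞) := lt_of_lt_of_le h h1
      exact absurd (Nat.cast_lt.mp h2) (not_lt.mpr hkn)
    · intro h
      rw [hs'mem] at h
      have hub : ∀ b ∈ ((fun k : ℕ => (k : ℕ∞)) '' {k : ℕ | 1 ≤ k ∧ ω k ∈ A}),
          ((n + 1 : ℕ) : ℕ∞) ≤ b := by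
        rintro b ⟨k, ⟨hk1, hkA⟩, rfl⟩
        have hk : n < k := by
          by_contra hkn
          push_neg at hkn
          exact h k hk1 hkn hkA
        show ((n + 1 : ℕ) : ℕ∞) ≤ (k : ℕ∞)
        exact_mod_cast Nat.succ_le_of_lt hk
      calc (n : ℕ∞) < ((n + 1 : ℕ) : ℕ∞) := by exact_mod_cast Nat.lt_succ_self n
        _ ≤ hitTime A ω := le_sInf hub
  -- the expectation as a sum of tail probabilities
  have hq : (∫⁻ ω, (hitTime A ω : ℝ≥0∞) ∂(Pr x)) = ∑' n, Pr x (s' n) := by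
    have hfun : ∀ ω, (hitTime A ω : ℝ≥0∞)
        = ∑' n : ℕ, (s' n).indicator (fun _ => (1 : ℝ≥0∞)) ω := by
      intro ω
      rw [enat_toENNReal_eq_tsum]
      refine tsum_congr fun n => ?_
      by_cases hω : ω ∈ s' n
      · simp [Set.indicator_of_mem hω, (hset n ω).mpr hω]
      · have : ¬ (n : ℕ∞) < hitTime A ω := fun h => hω ((hset n ω).mp h)
        simp [Set.indicator_of_notMem hω, this]
    rw [lintegral_congr hfun,
      lintegral_tsum fun n => (measurable_const.indicator (hs'meas n)).aemeasurable]
    refine tsum_congr fun n => ?_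
    rw [lintegral_indicator_const (hs'meas n), one_mul]
  -- tail probabilities are dominated by the cylinder probabilities
  have hqp : ∀ n, Pr x (s' n) ≤ p n := by
    intro n
    have hpre : p n = Pr x ((fun ω : ℕ → S => fun i : Fin (n + 1) => ω (i : ℕ)) ⁻¹' Bset A n) := by
      simp only [hp, hμ]
      exact Measure.map_apply (hproj n) (measurableSet_Bset hA n)
    have hsub : s' n ⊆
        ((fun ω : ℕ → S => fun i : Fin (n + 1) => ω (i : ℕ)) ⁻¹' Bset A n)
          ∪ ((fun ω : ℕ → S => ω 0) ⁻¹' A) := by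
      intro ω hω
      by_cases h0 : ω 0 ∈ A
      · exact Or.inr h0
      · refine Or.inl fun i => ?_
        show ω (i : ℕ) ∉ A
        rcases Nat.eq_zero_or_pos (i : ℕ) with hi | hi
        · rw [hi]; exact h0
        · have hin : (i : ℕ) ≤ n := Nat.lt_succ_iff.mp i.isLt
          exact (hs'mem n ω).mp hω (i : ℕ) hi hin
    have h0 : Pr x ((fun ω : ℕ → S => ω 0) ⁻¹' A) = 0 := by
      rw [← Measure.map_apply (measurable_pi_apply 0) hA, hinit, Measure.dirac_apply' x hA]
      simp [hx]
    calc Pr x (s' n) ≤ Pr x (((fun ω : ℕ → S => fun i : Fin (n + 1) => ω (i : ℕ)) ⁻¹' Bset A n)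
          ∪ ((fun ω : ℕ → S => ω 0) ⁻¹' A)) := measure_mono hsub
      _ ≤ Pr x ((fun ω : ℕ → S => fun i : Fin (n + 1) => ω (i : ℕ)) ⁻¹' Bset A n)
          + Pr x ((fun ω : ℕ → S => ω 0) ⁻¹' A) := measure_union_le _ _
      _ = p n := by rw [h0, add_zero, ← hpre]
  have hbound : (∫⁻ ω, (hitTime A ω : ℝ≥0∞) ∂(Pr x)) ≤ V x / (c : ℝ≥0∞) := by
    rw [hq]
    exact le_trans (ENNReal.tsum_le_tsum hqp) htsum_p
  refine ⟨hbound, ?_⟩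
  -- almost sure finiteness
  have hIset : {ω : ℕ → S | hitTime A ω < ⊤} = (⋂ n : ℕ, s' n)ᶜ := by
    ext ω
    simp only [Set.mem_setOf_eq, Set.mem_compl_iff, Set.mem_iInter]
    rw [lt_top_iff_ne_top]
    constructor
    · intro h hall
      exact h ((enat_lt_iff_forall _).mp fun n => (hset n ω).mpr (hall n))
    · intro h hTtop
      refine h fun n => (hset n ω).mp ?_
      rw [hTtop]
      exact lt_top_iff_ne_top.mpr (by simp)
  have hI0 : Pr x (⋂ n, s' n) = 0 := by
    by_contra h0
    have hle : ∀ n : ℕ, Pr x (⋂ m, s' m) ≤ Pr x (s' n) :=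
      fun n => measure_mono (Set.iInter_subset _ n)
    have htop : (⊤ : ℝ≥0∞) ≤ ∑' n, Pr x (s' n) := by
      calc (⊤ : ℝ≥0∞) = ∑' _ : ℕ, Pr x (⋂ m, s' m) :=
            (ENNReal.tsum_const_eq_top_of_ne_zero h0).symm
        _ ≤ ∑' n, Pr x (s' n) := ENNReal.tsum_le_tsum hle
    have hfin : (∑' n, Pr x (s' n)) < ⊤ :=
      lt_of_le_of_lt (le_trans (ENNReal.tsum_le_tsum hqp) htsum_p)
        (ENNReal.div_lt_top (hVfin x) hcne)
    exact lt_irrefl _ (lt_of_le_of_lt htop hfin)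
  rw [hIset, measure_compl (MeasurableSet.iInter fun n => hs'meas n) (measure_ne_top _ _), hI0,
    measure_univ, tsub_zero]
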